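/- (Proposition 6, monotonicity in the threshold) Let K ≥ 1 and let k₁, k₂ be natural numbers with 0 ≤ k₁ < k₂ ≤ K-1. Let P_F ∈ (0,1) and suppose P_M¹, P_M² ∈ (0,1) satisfy B(k₁; K, P_F) + B(k₁; K, 1-P_M¹) = 1 and B(k₂; K, P_F) + B(k₂; K, 1-P_M²) = 1. Then P_M¹ > P_M². -/

import Mathlib

/-- Binomial cumulative distribution function: probability of at most `k` successes out of
`K` trials, each with success probability `p`. -/
noncomputable def binCdf (K k : ℕ) (p : ℝ) : ℝ :=
  ∑ i ∈ Finset.range (k + 1), (K.choose i : ℝ) * p ^ i * (1 - p) ^ (K - i)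

private def binTel (K : ℕ) (p : ℝ) : ℕ → ℝ
  | 0 => 0
  | (s+1) => (K : ℝ) * ((K-1).choose s : ℝ) * p ^ s * (1 - p) ^ (K - 1 - s)

private lemma term_hasDerivAt (K i : ℕ) (p : ℝ) :
    HasDerivAt (fun q : ℝ => (K.choose i : ℝ) * q ^ i * (1 - q) ^ (K - i))
      ((K.choose i : ℝ) * ((i : ℝ) * p ^ (i-1) * (1-p)^(K-i)
        - ((K-i : ℕ) : ℝ) * p^i * (1-p)^(K-i-1))) p := by
  have h1 : HasDerivAt (fun q : ℝ => 1 - q) (-1) p := (hasDerivAt_id p).const_sub 1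
  have h2 : HasDerivAt (fun q : ℝ => (1 - q) ^ (K - i))
      ((((K - i : ℕ) : ℝ) * (1 - p) ^ (K - i - 1)) * (-1)) p :=
    (hasDerivAt_pow (K - i) (1 - p)).comp p h1
  have h3 : HasDerivAt (fun q : ℝ => q ^ i) ((i : ℝ) * p ^ (i - 1)) p := hasDerivAt_pow i p
  have h4 := ((h3.const_mul (K.choose i : ℝ)).mul h2)
  refine h4.congr_deriv ?_
  ring

private lemma idA (K s : ℕ) (hK : 1 ≤ K) :
    ((s+1 : ℕ) : ℝ) * (K.choose (s+1) : ℝ) = (K : ℝ) * ((K-1).choose s : ℝ) := by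
  have h : K * ((K-1).choose s) = (K.choose (s+1)) * (s+1) := by
    have := Nat.add_one_mul_choose_eq (K-1) s
    have hK' : K - 1 + 1 = K := by omega
    rw [hK'] at this
    exact this
  have := congrArg (fun n : ℕ => (n : ℝ)) h
  push_cast at this ⊢
  linarith

private lemma idB (K s : ℕ) (hK : 1 ≤ K) :
    ((K - (s+1) : ℕ) : ℝ) * (K.choose (s+1) : ℝ) = (K : ℝ) * ((K-1).choose (s+1) : ℝ) := by
  have h1 : K.choose (s+2) * (s+2) = K.choose (s+1) * (K - (s+1)) :=
    Nat.choose_succ_right_eq K (s+1)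
  have h2 := idA K (s+1) hK
  have := congrArg (fun n : ℕ => (n : ℝ)) h1
  push_cast at this h2 ⊢
  nlinarith [this, h2]

private lemma binCdf_hasDerivAt (K k : ℕ) (hK : 1 ≤ K) (p : ℝ) :
    HasDerivAt (fun q => binCdf K k q)
      (-((K : ℝ) * ((K-1).choose k : ℝ) * p ^ k * (1-p) ^ (K-1-k))) p := by
  have hsum : HasDerivAt (fun q => binCdf K k q)
      (∑ i ∈ Finset.range (k+1), (K.choose i : ℝ) * ((i : ℝ) * p ^ (i-1) * (1-p)^(K-i)
        - ((K-i : ℕ) : ℝ) * p^i * (1-p)^(K-i-1))) p := by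
    unfold binCdf
    exact HasDerivAt.fun_sum (fun i _ => term_hasDerivAt K i p)
  have hterm : ∀ i, (K.choose i : ℝ) * ((i : ℝ) * p ^ (i-1) * (1-p)^(K-i)
        - ((K-i : ℕ) : ℝ) * p^i * (1-p)^(K-i-1))
      = binTel K p i - binTel K p (i+1) := by
    intro i
    match i with
    | 0 =>
      simp only [binTel, Nat.choose_zero_right, Nat.cast_one, Nat.cast_zero, pow_zero,
        Nat.sub_zero, Nat.choose_zero_right]
      ring
    | (s+1) =>
      have e1 : K - (s+1) = K - 1 - s := by omega
      have e2 : K - 1 - s - 1 = K - 1 - (s+1) := by omega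
      have hA := idA K s hK
      have hB := idB K s hK
      rw [e1] at hB
      simp only [binTel]
      rw [e1, e2, Nat.add_sub_cancel]
      push_cast at hA hB ⊢
      linear_combination (p ^ s * (1-p)^(K-1-s)) * hA - (p^(s+1) * (1-p)^(K-1-(s+1))) * hB
  have hsum2 : (∑ i ∈ Finset.range (k+1), (K.choose i : ℝ) * ((i : ℝ) * p ^ (i-1) * (1-p)^(K-i)
        - ((K-i : ℕ) : ℝ) * p^i * (1-p)^(K-i-1)))
      = -((K : ℝ) * ((K-1).choose k : ℝ) * p ^ k * (1-p) ^ (K-1-k)) := by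
    calc (∑ i ∈ Finset.range (k+1), (K.choose i : ℝ) * ((i : ℝ) * p ^ (i-1) * (1-p)^(K-i)
        - ((K-i : ℕ) : ℝ) * p^i * (1-p)^(K-i-1)))
        = ∑ i ∈ Finset.range (k+1), (binTel K p i - binTel K p (i+1)) := by
          exact Finset.sum_congr rfl (fun i _ => hterm i)
      _ = binTel K p 0 - binTel K p (k+1) := Finset.sum_range_sub' (binTel K p) (k+1)
      _ = -((K : ℝ) * ((K-1).choose k : ℝ) * p ^ k * (1-p) ^ (K-1-k)) := by
          simp [binTel]
  rw [hsum2] at hsum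
  exact hsum

private lemma binCdf_strictAntiOn (K k : ℕ) (hK : 1 ≤ K) (hk : k ≤ K - 1) :
    StrictAntiOn (binCdf K k) (Set.Icc (0:ℝ) 1) := by
  apply strictAntiOn_of_deriv_neg (convex_Icc 0 1)
  · exact fun p _ => (binCdf_hasDerivAt K k hK p).continuousAt.continuousWithinAt
  · intro x hx
    rw [interior_Icc] at hx
    rw [(binCdf_hasDerivAt K k hK x).deriv]
    have h1 : (0:ℝ) < K := by exact_mod_cast hK
    have h2 : (0:ℝ) < ((K-1).choose k : ℝ) := by
      exact_mod_cast Nat.choose_pos hk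
    have h3 : (0:ℝ) < x ^ k := pow_pos hx.1 k
    have h4 : (0:ℝ) < (1-x) ^ (K-1-k) := pow_pos (by linarith [hx.2]) _
    have := mul_pos (mul_pos (mul_pos h1 h2) h3) h4
    linarith

private lemma binCdf_lt_of_lt (K k₁ k₂ : ℕ) (hk : k₁ < k₂) (hk₂ : k₂ < K) (p : ℝ)
    (hp : p ∈ Set.Ioo (0:ℝ) 1) : binCdf K k₁ p < binCdf K k₂ p := by
  unfold binCdf
  apply Finset.sum_lt_sum_of_subset (i := k₂)
  · exact Finset.range_subset_range.2 (by omega)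
  · simp
  · simp; omega
  · have hc : (0:ℝ) < (K.choose k₂ : ℝ) := by exact_mod_cast Nat.choose_pos hk₂.le
    have := mul_pos (mul_pos hc (pow_pos hp.1 k₂)) (pow_pos (by linarith [hp.2] : (0:ℝ) < 1 - p) (K - k₂))
    linarith
  · intro j hj _
    have hjK : j ≤ K := by simp at hj; omega
    have hc : (0:ℝ) ≤ (K.choose j : ℝ) := by positivity
    have := mul_nonneg (mul_nonneg hc (pow_nonneg hp.1.le j)) (pow_nonneg (by linarith [hp.2] : (0:ℝ) ≤ 1 - p) (K - j))
    linarith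

/-- Proposition 6, monotonicity in the threshold: for `0 ≤ k₁ < k₂ ≤ K-1`,
`P_F ∈ (0,1)` and `P_M¹, P_M² ∈ (0,1)` with `B(k₁; K, P_F) + B(k₁; K, 1-P_M¹) = 1` and
`B(k₂; K, P_F) + B(k₂; K, 1-P_M²) = 1`, one has `P_M¹ > P_M²`. -/
theorem fusion_curve_mono_in_threshold (K k₁ k₂ : ℕ) (hK : 1 ≤ K)
    (hk : k₁ < k₂) (hk₂ : k₂ ≤ K - 1)
    (PF PM₁ PM₂ : ℝ) (hPF : PF ∈ Set.Ioo (0:ℝ) 1)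
    (hPM₁ : PM₁ ∈ Set.Ioo (0:ℝ) 1) (hPM₂ : PM₂ ∈ Set.Ioo (0:ℝ) 1)
    (h1 : binCdf K k₁ PF + binCdf K k₁ (1 - PM₁) = 1)
    (h2 : binCdf K k₂ PF + binCdf K k₂ (1 - PM₂) = 1) :
    PM₂ < PM₁ := by
  have hk₂K : k₂ < K := by omega
  have ha : (1 - PM₁) ∈ Set.Ioo (0:ℝ) 1 := ⟨by linarith [hPM₁.2], by linarith [hPM₁.1]⟩
  have hb : (1 - PM₂) ∈ Set.Ioo (0:ℝ) 1 := ⟨by linarith [hPM₂.2], by linarith [hPM₂.1]⟩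
  have hPFlt : binCdf K k₁ PF < binCdf K k₂ PF := binCdf_lt_of_lt K k₁ k₂ hk hk₂K PF hPF
  have halt : binCdf K k₁ (1 - PM₁) < binCdf K k₂ (1 - PM₁) :=
    binCdf_lt_of_lt K k₁ k₂ hk hk₂K _ ha
  have key : binCdf K k₂ (1 - PM₂) < binCdf K k₂ (1 - PM₁) := by linarith
  have hanti := binCdf_strictAntiOn K k₂ hK hk₂
  have haI : (1 - PM₁) ∈ Set.Icc (0:ℝ) 1 := ⟨ha.1.le, ha.2.le⟩
  have hbI : (1 - PM₂) ∈ Set.Icc (0:ℝ) 1 := ⟨hb.1.le, hb.2.le⟩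
  by_contra hcon
  push_neg at hcon
  rcases eq_or_lt_of_le hcon with heq | hlt
  · rw [heq] at key; exact lt_irrefl _ key
  · have : 1 - PM₂ < 1 - PM₁ := by linarith
    have := hanti hbI haI this
    linarith
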